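/- arXiv:1809.03791 — 2 statements merged into one kernel-verified Lean document; each statement's English description precedes it below -/
import Mathlib

section
/- A point p outside a convex polygon, whose full two-sided outer-billiard orbit is defined, is periodic if and only if its symbolic code ρ(p) (the bi-infinite sequence recording, at each time n, the index of the vertex cone V_{u_n} containing T^n(p)) is a periodic sequence, provided every iterate lies in the interior of some vertex cone. -/
open Complex

noncomputable section

/-- Cross product of two planar vectors, viewed as complex numbers. -/
def cross (v w : ℂ) : ℝ := ((starRingEnd ℂ) v * w).im

/-- The interior of the vertex cone at the vertex `a` of the convex figure `γ`:
points `p` outside `γ` whose right tangent line touches `γ` exactly at `a`. -/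
def intVertexCone (γ : Set ℂ) (a : ℂ) : Set ℂ :=
  {p | p ∉ γ ∧ a ∈ γ ∧ ∀ x ∈ γ, x ≠ a → 0 < cross (a - p) (x - p)}

lemma cross_eval (v w : ℂ) : cross v w = v.re * w.im - v.im * w.re := by
  simp [cross, Complex.mul_im]; ring

lemma cone_unique {γ : Set ℂ} {a b p : ℂ} (hp : p ∈ intVertexCone γ a)
    (hq : p ∈ intVertexCone γ b) : a = b := by
  by_contra h
  have h1 := hp.2.2 b hq.2.1 (fun e => h e.symm)
  have h2 := hq.2.2 a hp.2.1 h
  rw [cross_eval] at h1 h2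
  simp [Complex.sub_re, Complex.sub_im] at h1 h2
  nlinarith [h1, h2]

lemma T_inj {γ : Set ℂ} {a b p q : ℂ} (hp : p ∈ intVertexCone γ a)
    (hq : q ∈ intVertexCone γ b) (h : 2*a - p = 2*b - q) : p = q := by
  by_cases hab : a = b
  · subst hab; linear_combination -h
  · exfalso
    have h1 := hp.2.2 b hq.2.1 (fun e => hab e.symm)
    have h2 := hq.2.2 a hp.2.1 hab
    have hq' : q = 2*b - 2*a + p := by linear_combination h
    rw [hq'] at h2
    rw [cross_eval] at h1 h2
    simp [Complex.sub_re, Complex.sub_im, Complex.add_re, Complex.add_im,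
      Complex.mul_re, Complex.mul_im] at h1 h2
    nlinarith [h1, h2]

lemma ray_lemma {γ : Set ℂ} {a p d : ℂ}
    (h : ∀ m : ℕ, p + (m : ℂ) * d ∈ intVertexCone γ a) :
    ∀ x ∈ γ, x ≠ a → 0 ≤ cross d (a - x) := by
  intro x hx hxa
  by_contra hc
  push_neg at hc
  have key : ∀ m : ℕ, 0 < cross (a - p) (x - p) + (m:ℝ) * cross d (a - x) := by
    intro m
    have h0 := (h m).2.2 x hx hxa
    have id : cross (a - (p + (m:ℂ)*d)) (x - (p + (m:ℂ)*d))
        = cross (a-p) (x-p) + (m:ℝ) * cross d (a-x) := by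
      simp [cross_eval, Complex.sub_re, Complex.sub_im, Complex.add_re, Complex.add_im,
        Complex.mul_re, Complex.mul_im]
      ring
    rw [id] at h0
    exact h0
  obtain ⟨M, hM⟩ := exists_nat_gt (cross (a-p) (x-p) / (-(cross d (a-x))))
  have hlt : cross (a-p) (x-p) < (M:ℝ) * (-(cross d (a-x))) := by
    rwa [div_lt_iff₀ (by linarith)] at hM
  have := key M
  nlinarith

lemma cross_sub_right (v a x : ℂ) : cross v (a - x) = cross v a - cross v x := by
  simp [cross_eval, Complex.sub_re, Complex.sub_im]; ring

/-- For a convex polygon `γ` with vertices `A_0, …, A_{m-1}`, a point whose full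
two-sided outer billiard orbit `o : ℤ → ℂ` is defined, with every iterate lying in the
interior of some vertex cone, is periodic if and only if its symbolic code
`u : ℤ → Fin m` (recording the cone containing each iterate) is a periodic sequence. -/
theorem stmt4 (m : ℕ) (A : Fin m → ℂ) (hA : Function.Injective A)
    (γ : Set ℂ) (hγ : γ = convexHull ℝ (Set.range A))
    (hint : (interior γ).Nonempty)
    (T : ℂ → ℂ)
    (hT : ∀ i : Fin m, ∀ p ∈ intVertexCone γ (A i), T p = 2 * A i - p)
    (o : ℤ → ℂ) (ho : ∀ n : ℤ, o (n + 1) = T (o n))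
    (u : ℤ → Fin m) (hu : ∀ n : ℤ, o n ∈ intVertexCone γ (A (u n))) :
    (∃ k : ℕ, 1 ≤ k ∧ o (k : ℤ) = o 0) ↔
      (∃ k : ℕ, 1 ≤ k ∧ ∀ n : ℤ, u (n + (k : ℤ)) = u n) := by
  have step : ∀ n : ℤ, o (n + 1) = 2 * A (u n) - o n := fun n => by
    rw [ho n, hT (u n) (o n) (hu n)]
  constructor
  · rintro ⟨k, hk1, hk⟩
    refine ⟨k, hk1, ?_⟩
    have hall : ∀ n : ℤ, o (n + k) = o n := by
      intro n
      induction n using Int.induction_on with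
      | zero => simpa using hk
      | succ i ih =>
        have e1 : ((i:ℤ)+1+k) = ((i:ℤ)+k)+1 := by ring
        rw [e1, ho, ih, ← ho]
      | pred i ih =>
        have e1 : (-(i:ℤ)-1+k) + 1 = (-(i:ℤ)+k) := by ring
        have e2 : (-(i:ℤ)-1) + 1 = (-(i:ℤ)) := by ring
        have h1 := step (-(i:ℤ)-1+k)
        have h2 := step (-(i:ℤ)-1)
        rw [e1] at h1
        rw [e2] at h2
        have heq : 2 * A (u (-(i:ℤ)-1+k)) - o (-(i:ℤ)-1+k)
            = 2 * A (u (-(i:ℤ)-1)) - o (-(i:ℤ)-1) := by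
          rw [← h1, ← h2, ih]
        exact T_inj (hu _) (hu _) heq
    intro n
    have h2 := hu (n + k)
    rw [hall n] at h2
    exact hA (cone_unique h2 (hu n))
  · rintro ⟨k, hk1, hk⟩
    refine ⟨2*k, by omega, ?_⟩
    rw [show ((2*k:ℕ):ℤ) = 2*(k:ℤ) by push_cast; ring]
    by_contra hne
    set v : ℂ := o (2*(k:ℤ)) - o 0 with hvdef
    have hv : v ≠ 0 := fun h => hne (by rw [← sub_eq_zero]; exact h)
    -- periodicity of u
    have periodU : ∀ (n : ℤ) (j : ℕ), u (n + (j:ℤ) * k) = u n := by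
      intro n j
      induction j with
      | zero => simp
      | succ j ih =>
        have e : (n + ((j:ℕ)+1:ℕ) * (k:ℤ)) = (n + (j:ℤ)*k) + k := by push_cast; ring
        rw [e, hk, ih]
    have periodU2 : ∀ n : ℤ, u (n + 2*(k:ℤ)) = u n := by
      intro n
      have := periodU n 2
      push_cast at this
      exact this
    -- difference flips sign each step
    have dstep : ∀ n : ℤ, o (n+1+2*(k:ℤ)) - o (n+1) = -(o (n+2*(k:ℤ)) - o n) := by
      intro n
      have e : (n+1+2*(k:ℤ)) = (n+2*(k:ℤ))+1 := by ring
      rw [e, step, step n, periodU2 n]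
      ring
    have dval : ∀ j : ℕ, (o (2*(j:ℤ) + 2*(k:ℤ)) - o (2*(j:ℤ)) = v ∧
        o (2*(j:ℤ)+1+2*(k:ℤ)) - o (2*(j:ℤ)+1) = -v) := by
      intro j
      induction j with
      | zero =>
        constructor
        · simp [hvdef]
        · have h := dstep 0
          norm_num at h ⊢
          rw [h, hvdef]
          ring
      | succ j ih =>
        have e1 : (2*(((j:ℕ)+1:ℕ):ℤ)) = (2*(j:ℤ)+1)+1 := by push_cast; ring
        have e2 : (2*(((j:ℕ)+1:ℕ):ℤ)+1) = (2*(((j:ℕ)+1:ℕ):ℤ))+1 := by ring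
        constructor
        · rw [e1]
          rw [dstep (2*(j:ℤ)+1), ih.2]
          ring
        · rw [e2, dstep (2*(((j:ℕ)+1:ℕ)):ℤ), e1, dstep (2*(j:ℤ)+1), ih.2]
          ring
    -- orbit along rays
    have oRay : ∀ j mm : ℕ, (o (2*(j:ℤ) + (mm:ℤ)*(2*(k:ℤ))) = o (2*(j:ℤ)) + (mm:ℂ)*v ∧
        o (2*(j:ℤ)+1 + (mm:ℤ)*(2*(k:ℤ))) = o (2*(j:ℤ)+1) + (mm:ℂ)*(-v)) := by
      intro j mm
      induction mm with
      | zero => simp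
      | succ mm ih =>
        have e1 : (2*(j:ℤ) + ((mm:ℕ)+1:ℕ)*(2*(k:ℤ))) = (2*((j:ℤ)+(mm:ℤ)*k)) + 2*(k:ℤ) := by
          push_cast; ring
        have e2 : (2*(j:ℤ) + ((mm:ℤ))*(2*(k:ℤ))) = (2*((j:ℤ)+(mm:ℤ)*k)) := by ring
        have e3 : (2*(j:ℤ)+1 + ((mm:ℕ)+1:ℕ)*(2*(k:ℤ))) = (2*((j:ℤ)+(mm:ℤ)*k)+1) + 2*(k:ℤ) := by
          push_cast; ring
        have e4 : (2*(j:ℤ)+1 + ((mm:ℤ))*(2*(k:ℤ))) = (2*((j:ℤ)+(mm:ℤ)*k)+1) := by ring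
        have hjm : ∃ jm : ℕ, (jm:ℤ) = (j:ℤ)+(mm:ℤ)*k := ⟨j + mm*k, by push_cast; ring⟩
        obtain ⟨jm, hjm⟩ := hjm
        constructor
        · rw [e1, ← hjm]
          have hd := (dval jm).1
          rw [sub_eq_iff_eq_add] at hd
          rw [hd, hjm, ← e2, ih.1]
          push_cast; ring
        · rw [e3, ← hjm]
          have hd := (dval jm).2
          rw [sub_eq_iff_eq_add] at hd
          rw [hd, hjm, ← e4, ih.2]
          push_cast; ring
    -- cone membership along rays
    have hconeE : ∀ j : ℕ, ∀ mm : ℕ,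
        o (2*(j:ℤ)) + (mm:ℂ)*v ∈ intVertexCone γ (A (u (2*(j:ℤ)))) := by
      intro j mm
      have h0 := hu (2*(j:ℤ) + (mm:ℤ)*(2*(k:ℤ)))
      rw [(oRay j mm).1] at h0
      have hper : u (2*(j:ℤ) + (mm:ℤ)*(2*(k:ℤ))) = u (2*(j:ℤ)) := by
        have := periodU (2*(j:ℤ)) (2*mm)
        push_cast at this
        rw [← this]; congr 1; ring
      rwa [hper] at h0
    have hconeO : ∀ j : ℕ, ∀ mm : ℕ,
        o (2*(j:ℤ)+1) + (mm:ℂ)*(-v) ∈ intVertexCone γ (A (u (2*(j:ℤ)+1))) := by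
      intro j mm
      have h0 := hu (2*(j:ℤ)+1 + (mm:ℤ)*(2*(k:ℤ)))
      rw [(oRay j mm).2] at h0
      have hper : u (2*(j:ℤ)+1 + (mm:ℤ)*(2*(k:ℤ))) = u (2*(j:ℤ)+1) := by
        have := periodU (2*(j:ℤ)+1) (2*mm)
        push_cast at this
        rw [← this]; congr 1; ring
      rwa [hper] at h0
    -- max / min properties
    have maxE : ∀ j : ℕ, ∀ x ∈ γ, x ≠ A (u (2*(j:ℤ))) →
        cross v x ≤ cross v (A (u (2*(j:ℤ)))) := by
      intro j x hx hxa
      have := ray_lemma (hconeE j) x hx hxa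
      rw [cross_sub_right] at this
      linarith
    have minO : ∀ j : ℕ, ∀ x ∈ γ, x ≠ A (u (2*(j:ℤ)+1)) →
        cross v (A (u (2*(j:ℤ)+1))) ≤ cross v x := by
      intro j x hx hxa
      have := ray_lemma (hconeO j) x hx hxa
      have e : cross (-v) (A (u (2*(j:ℤ)+1)) - x)
          = -(cross v (A (u (2*(j:ℤ)+1))) - cross v x) := by
        simp [cross_eval, Complex.sub_re, Complex.sub_im, Complex.neg_re, Complex.neg_im]
        ring
      rw [e] at this
      linarith
    set M : ℝ := cross v (A (u 0)) with hM
    set μ : ℝ := cross v (A (u 1)) with hμ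
    have maxVal : ∀ j : ℕ, cross v (A (u (2*(j:ℤ)))) = M := by
      intro j
      have h0 : ∀ x ∈ γ, x ≠ A (u 0) → cross v x ≤ M := by
        have := maxE 0; simpa using this
      by_cases he : A (u (2*(j:ℤ))) = A (u 0)
      · rw [he]
      · have l1 := h0 (A (u (2*(j:ℤ)))) (hu (2*(j:ℤ))).2.1 he
        have l2 := maxE j (A (u 0)) (hu 0).2.1 (fun e => he e.symm)
        linarith
    have minVal : ∀ j : ℕ, cross v (A (u (2*(j:ℤ)+1))) = μ := by
      intro j
      have h0 : ∀ x ∈ γ, x ≠ A (u 1) → μ ≤ cross v x := by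
        have := minO 0; simpa using this
      by_cases he : A (u (2*(j:ℤ)+1)) = A (u 1)
      · rw [he]
      · have l1 := h0 (A (u (2*(j:ℤ)+1))) (hu (2*(j:ℤ)+1)).2.1 he
        have l2 := minO j (A (u 1)) (hu 1).2.1 (fun e => he e.symm)
        linarith
    -- g recurrence
    have grec : ∀ n : ℤ, cross v (o (n+1)) = 2 * cross v (A (u n)) - cross v (o n) := by
      intro n
      rw [step n]
      simp [cross_eval, Complex.sub_re, Complex.sub_im, Complex.mul_re, Complex.mul_im]
      ring
    have gEven : ∀ j : ℕ, cross v (o (2*(j:ℤ))) = cross v (o 0) + 2*(j:ℝ)*(μ - M) := by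
      intro j
      induction j with
      | zero => simp
      | succ j ih =>
        have e1 : (2*(((j:ℕ)+1:ℕ):ℤ)) = (2*(j:ℤ)+1)+1 := by push_cast; ring
        have h1 := grec (2*(j:ℤ))
        rw [maxVal j] at h1
        have h2 := grec (2*(j:ℤ)+1)
        rw [minVal j] at h2
        rw [e1, h2, h1, ih]
        push_cast; ring
    have gK : cross v (o (2*(k:ℤ))) = cross v (o 0) := by
      have hoK : o (2*(k:ℤ)) = o 0 + v := by rw [hvdef]; ring
      rw [hoK]
      simp [cross_eval, Complex.add_re, Complex.add_im]
      ring
    have hμM : μ = M := by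
      have := gEven k
      rw [gK] at this
      have hk0 : (0:ℝ) < (k:ℝ) := by exact_mod_cast hk1
      have h0 : 2*(k:ℝ)*(μ - M) = 0 := by linarith
      rcases mul_eq_zero.mp h0 with h | h
      · nlinarith
      · linarith
    -- L is constant on γ
    have Lconst : ∀ x ∈ γ, cross v x = M := by
      intro x hx
      have hup : cross v x ≤ M := by
        by_cases he : x = A (u 0)
        · rw [he]
        · have := maxE 0 x hx (by simpa using he)
          simpa using this
      have hlo : M ≤ cross v x := by
        by_cases he : x = A (u 1)
        · rw [he, ← hμM]
        · have := minO 0 x hx (by simpa using he)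
          rw [show (2*((0:ℕ):ℤ)+1) = (1:ℤ) by simp] at this
          rw [← hμ] at this
          linarith [hμM ▸ this]
      linarith
    -- contradiction with nonempty interior
    obtain ⟨p, hp⟩ := hint
    obtain ⟨ε, hε, hball⟩ := Metric.isOpen_iff.mp isOpen_interior p hp
    set t : ℝ := ε / (2*(‖v‖ + 1)) with ht
    have ht0 : 0 < t := by positivity
    set w : ℂ := (t:ℂ) * (Complex.I * v) with hw
    have hwn : ‖w‖ < ε := by
      have : ‖w‖ = t * ‖v‖ := by
        rw [hw]; simp [norm_mul, abs_of_pos ht0]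
      rw [this, ht, div_mul_eq_mul_div, div_lt_iff₀ (by positivity)]
      nlinarith [norm_nonneg v]
    have hmem1 : p + w ∈ γ := by
      apply interior_subset
      apply hball
      simp [Metric.mem_ball, dist_eq_norm]
      simpa using hwn
    have hmem2 : p - w ∈ γ := by
      apply interior_subset
      apply hball
      simp [Metric.mem_ball, dist_eq_norm]
      simpa [norm_sub_rev] using hwn
    have h1 := Lconst _ hmem1
    have h2 := Lconst _ hmem2
    have key : cross v (p+w) - cross v (p-w) = 2*t*(v.re^2+v.im^2) := by
      rw [hw]
      simp [cross_eval, Complex.add_re, Complex.add_im, Complex.sub_re, Complex.sub_im,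
        Complex.mul_re, Complex.mul_im, Complex.I_re, Complex.I_im,
        Complex.ofReal_re, Complex.ofReal_im]
      ring
    have hpos : 0 < v.re^2 + v.im^2 := by
      rcases (show v.re ≠ 0 ∨ v.im ≠ 0 by
        by_contra hcc
        push_neg at hcc
        exact hv (Complex.ext hcc.1 hcc.2)) with h | h
      · positivity
      · positivity
    rw [h1, h2] at key
    nlinarith
end
end

section
/- If (Y_n) is a sequence of pairwise disjoint nonempty compact subsets of the plane converging (in Hausdorff distance) to a point y, and for each n all points of Y_n are periodic under a map T with the minimal period of points of Y_{n+3} at least twice the minimal period of points of Y_n, then y is not a periodic point of T, provided that every periodic point of T has a neighborhood in which all points except possibly one have the same period. -/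
open Function

noncomputable section

/-- If `(Y n)` is a sequence of pairwise disjoint nonempty compact subsets of the plane
converging in Hausdorff distance to a point `y`, all points of `Y n` are periodic under
`T` with common minimal period `P n`, and `P (n+3) ≥ 2 · P n` for all `n`, then `y` is
not periodic under `T` — provided every periodic point of `T` has a neighborhood all of
whose points, except possibly one, share the same minimal period. -/
theorem stmt8 (T : ℂ → ℂ) (Y : ℕ → Set ℂ)
    (hne : ∀ n, (Y n).Nonempty) (hcpt : ∀ n, IsCompact (Y n))
    (hdisj : Pairwise (Disjoint on Y))
    (y : ℂ)
    (hconv : Filter.Tendsto (fun n => EMetric.hausdorffEdist (Y n) ({y} : Set ℂ))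
      Filter.atTop (nhds 0))
    (P : ℕ → ℕ)
    (hP : ∀ n, ∀ p ∈ Y n, IsLeast {m : ℕ | 1 ≤ m ∧ T^[m] p = p} (P n))
    (hgrow : ∀ n, 2 * P n ≤ P (n + 3))
    (hnbhd : ∀ q : ℂ, (∃ m : ℕ, 1 ≤ m ∧ T^[m] q = q) →
      ∃ V ∈ nhds q, ∃ c : ℂ, ∃ m₀ : ℕ,
        ∀ x ∈ V, x ≠ c → IsLeast {m : ℕ | 1 ≤ m ∧ T^[m] x = x} m₀) :
    ¬ ∃ m : ℕ, 1 ≤ m ∧ T^[m] y = y := by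
  intro hy
  obtain ⟨V, hV, c, m₀, hVm⟩ := hnbhd y hy
  obtain ⟨ε, hε, hball⟩ := EMetric.mem_nhds_iff.1 hV
  have hev : ∀ᶠ n in Filter.atTop,
      EMetric.hausdorffEdist (Y n) ({y} : Set ℂ) < ε :=
    hconv.eventually_lt_const hε
  obtain ⟨N, hN⟩ := hev.exists_forall_of_atTop
  -- For n ≥ N, Y n ⊆ V
  have hsub : ∀ n, N ≤ n → Y n ⊆ V := by
    intro n hn x hx
    apply hball
    have h1 : EMetric.infEdist x ({y} : Set ℂ) ≤
        EMetric.hausdorffEdist (Y n) ({y} : Set ℂ) :=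
      EMetric.infEdist_le_hausdorffEdist_of_mem hx
    rw [EMetric.infEdist, EMetric.infEdist_singleton] at h1
    exact lt_of_le_of_lt h1 (hN n hn)
  -- If c ∉ Y n and n ≥ N then P n = m₀
  have key : ∀ n, N ≤ n → c ∉ Y n → P n = m₀ := by
    intro n hn hc
    obtain ⟨p, hp⟩ := hne n
    have hpc : p ≠ c := fun h => hc (h ▸ hp)
    exact (hP n p hp).unique (hVm p (hsub n hn hp) hpc)
  -- c belongs to at most one Y n
  have hc1 : ∀ m n : ℕ, m ≠ n → c ∈ Y m → c ∉ Y n := by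
    intro m n hmn hm hn
    exact Set.disjoint_left.1 (hdisj hmn) hm hn
  -- Find n ≥ N with c ∉ Y n and c ∉ Y (n+3)
  obtain ⟨n, hnN, h1, h2⟩ :
      ∃ n, N ≤ n ∧ c ∉ Y n ∧ c ∉ Y (n + 3) := by
    by_cases hcN : c ∈ Y N
    · exact ⟨N + 1, by omega, hc1 N (N + 1) (by omega) hcN,
        hc1 N (N + 4) (by omega) hcN⟩
    · by_cases hcN3 : c ∈ Y (N + 3)
      · exact ⟨N + 1, by omega, hc1 (N + 3) (N + 1) (by omega) hcN3,
          hc1 (N + 3) (N + 4) (by omega) hcN3⟩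
      · exact ⟨N, le_refl N, hcN, hcN3⟩
  have e1 : P n = m₀ := key n hnN h1
  have e2 : P (n + 3) = m₀ := key (n + 3) (by omega) h2
  have hpos : 1 ≤ P n := by
    obtain ⟨p, hp⟩ := hne n
    exact (hP n p hp).1.1
  have := hgrow n
  omega
end
end
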